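/- arXiv:1307.0604 — 2 statements merged into one kernel-verified Lean document; each statement's English description precedes it below -/
import Mathlib

section
/- In a compact topological space, if a subset C is closed, then the Cantor–Bendixson rank of C (computed in the ambient space) is attained: there is a point of C of maximal rank, provided this rank is an ordinal (not ∞), and there are only finitely many points of C attaining the maximal rank. -/
/-- The transfinite Cantor–Bendixson derivative: `CBd X α` is the set of points of
Cantor–Bendixson rank at least `α` (computed in the ambient space `X`). -/
noncomputable def CBd (X : Type*) [TopologicalSpace X] : Ordinal → Set X :=
  fun α => Ordinal.limitRecOn α Set.univ
    (fun _ ih => derivedSet ih)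
    (fun _ _ ih => ⋂ (β : Ordinal) (h : β < _), ih β h)

/-- A point `p` has Cantor–Bendixson rank exactly `α` if `p ∈ CBd X α` but
`p ∉ CBd X (α + 1)`. -/
def HasCBRank (X : Type*) [TopologicalSpace X] (p : X) (α : Ordinal) : Prop :=
  p ∈ CBd X α ∧ p ∉ CBd X (α + 1)

section aux

variable {X : Type*} [TopologicalSpace X]

lemma CBd_zero : CBd X 0 = Set.univ := by
  simp only [CBd, Ordinal.limitRecOn_zero]

lemma CBd_succ (α : Ordinal) : CBd X (α + 1) = derivedSet (CBd X α) := by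
  simp only [CBd, Ordinal.add_one_eq_succ, Ordinal.limitRecOn_succ]

lemma CBd_limit {α : Ordinal} (h : Order.IsSuccLimit α) :
    CBd X α = ⋂ (β : Ordinal) (_ : β < α), CBd X β := by
  simp only [CBd]
  rw [Ordinal.limitRecOn_limit _ _ _ _ h]

lemma CBd_succ_subset (α : Ordinal) : CBd X (α + 1) ⊆ CBd X α := by
  induction α using Ordinal.limitRecOn with
  | zero =>
    rw [CBd_zero]; exact Set.subset_univ _
  | add_one o ih =>
    rw [Ordinal.add_one_eq_succ] at *
    calc CBd X (Order.succ (Order.succ o)) = derivedSet (CBd X (Order.succ o)) := by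
            rw [← Ordinal.add_one_eq_succ, CBd_succ]
      _ ⊆ derivedSet (CBd X o) := derivedSet_mono _ _ ih
      _ = CBd X (Order.succ o) := by rw [← Ordinal.add_one_eq_succ, CBd_succ]
  | limit o ho ih =>
    intro x hx
    rw [CBd_limit ho]
    refine Set.mem_iInter₂.mpr fun β hβ => ?_
    have h1 : CBd X o ⊆ CBd X β := by
      rw [CBd_limit ho]; exact Set.iInter₂_subset β hβ
    have h2 : x ∈ CBd X (β + 1) := by
      rw [CBd_succ] at hx ⊢
      exact derivedSet_mono _ _ h1 hx
    exact ih β hβ h2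

lemma CBd_antitone (α : Ordinal) : ∀ β ≤ α, CBd X α ⊆ CBd X β := by
  induction α using Ordinal.limitRecOn with
  | zero =>
    intro β hβ
    rw [nonpos_iff_eq_zero.mp hβ]
  | add_one o ih =>
    intro β hβ
    rcases eq_or_lt_of_le hβ with rfl | h'
    · exact subset_rfl
    · have hle : β ≤ o := Order.lt_succ_iff.mp h'
      exact (CBd_succ_subset o).trans (ih β hle)
  | limit o ho ih =>
    intro β hβ
    rcases eq_or_lt_of_le hβ with rfl | h'
    · exact subset_rfl
    · rw [CBd_limit ho]
      exact Set.iInter₂_subset β h'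

lemma closure_derivedSet_subset (S : Set X) :
    closure (derivedSet S) ⊆ S ∪ derivedSet S := by
  intro x hx
  by_cases hxd : x ∈ derivedSet S
  · exact Or.inr hxd
  left
  rw [mem_derivedSet, accPt_iff_nhds] at hxd
  push_neg at hxd
  obtain ⟨U, hU, hUx⟩ := hxd
  obtain ⟨V, hVU, hVopen, hxV⟩ := mem_nhds_iff.mp hU
  obtain ⟨y, hyV, hyd⟩ := mem_closure_iff.mp hx V hVopen hxV
  rw [mem_derivedSet, accPt_iff_nhds] at hyd
  obtain ⟨z, ⟨hzV, hzS⟩, hzy⟩ := hyd V (hVopen.mem_nhds hyV)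
  have hz : z = x := hUx z ⟨hVU hzV, hzS⟩
  rwa [← hz]

lemma closure_CBd_succ_succ (α : Ordinal) :
    closure (CBd X (α + 1 + 1)) ⊆ CBd X (α + 1) := by
  have h1 : CBd X (α + 1 + 1) = derivedSet (CBd X (α + 1)) := CBd_succ _
  rw [h1]
  refine (closure_derivedSet_subset _).trans ?_
  rw [← CBd_succ]
  exact Set.union_subset subset_rfl (CBd_succ_subset _)

end aux

theorem stmt_3 {X : Type*} [TopologicalSpace X] [CompactSpace X]
    (C : Set X) (hC : IsClosed C) (hCne : C.Nonempty)
    (rk : X → Ordinal) (hrk : ∀ p ∈ C, HasCBRank X p (rk p)) :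
    ∃ p ∈ C, (∀ q ∈ C, rk q ≤ rk p) ∧ {q ∈ C | rk q = rk p}.Finite := by
  have two_eq : ∀ γ : Ordinal, γ + 2 = γ + 1 + 1 := by
    intro γ; rw [add_assoc, one_add_one_eq_two]
  -- a point of maximal rank exists
  have hmax : ∃ p ∈ C, ∀ q ∈ C, rk q ≤ rk p := by
    by_contra h
    push_neg at h
    haveI : Nonempty C := hCne.to_subtype
    set F : C → Set X := fun p => C ∩ closure (CBd X (rk p.1 + 2)) with hF
    have hcl : ∀ p : C, IsClosed (F p) := fun p => hC.inter isClosed_closure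
    have hcpt : ∀ p : C, IsCompact (F p) := fun p => (hcl p).isCompact
    have hne : ∀ p : C, (F p).Nonempty := by
      intro p
      obtain ⟨q, hqC, hq⟩ := h p.1 p.2
      obtain ⟨r, hrC, hr⟩ := h q hqC
      have hle : rk p.1 + 2 ≤ rk r := by
        rw [two_eq]
        calc rk p.1 + 1 + 1 ≤ rk q + 1 := by
              exact add_le_add_left (Order.succ_le_of_lt hq) 1
          _ ≤ rk r := Order.succ_le_of_lt hr
      exact ⟨r, hrC, subset_closure (CBd_antitone _ _ hle (hrk r hrC).1)⟩
    have hdir : Directed (· ⊇ ·) F := by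
      intro p q
      rcases le_total (rk p.1) (rk q.1) with hle | hle
      · exact ⟨q, Set.inter_subset_inter_right _
          (closure_mono (CBd_antitone _ _ (by exact add_le_add_left hle 2))), subset_rfl⟩
      · exact ⟨p, subset_rfl, Set.inter_subset_inter_right _
          (closure_mono (CBd_antitone _ _ (by exact add_le_add_left hle 2)))⟩
    obtain ⟨x, hx⟩ :=
      IsCompact.nonempty_iInter_of_directed_nonempty_isCompact_isClosed F hdir hne hcpt hcl
    have hxC : x ∈ C := (Set.mem_iInter.mp hx Classical.ofNonempty).1
    have hx2 : x ∈ closure (CBd X (rk x + 2)) := (Set.mem_iInter.mp hx ⟨x, hxC⟩).2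
    have : x ∈ CBd X (rk x + 1) := by
      rw [two_eq] at hx2
      exact closure_CBd_succ_succ (rk x) hx2
    exact (hrk x hxC).2 this
  obtain ⟨p, hpC, hpmax⟩ := hmax
  refine ⟨p, hpC, hpmax, ?_⟩
  by_contra hinf
  have hS : ({q ∈ C | rk q = rk p} : Set X).Infinite := hinf
  obtain ⟨x, hx⟩ := hS.exists_accPt_principal
  have hxcl : x ∈ closure {q ∈ C | rk q = rk p} :=
    mem_closure_iff_clusterPt.mpr (hx.clusterPt)
  have hxC : x ∈ C := hC.closure_subset (closure_mono (Set.sep_subset _ _) hxcl)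
  have hsub : {q ∈ C | rk q = rk p} ⊆ CBd X (rk p) := by
    rintro q ⟨hqC, hq⟩
    rw [← hq]
    exact (hrk q hqC).1
  have hxd : x ∈ CBd X (rk p + 1) := by
    rw [CBd_succ, mem_derivedSet]
    exact hx.mono (Filter.principal_mono.mpr hsub)
  have : x ∈ CBd X (rk x + 1) :=
    CBd_antitone _ _ (add_le_add_left (hpmax x hxC) 1) hxd
  exact (hrk x hxC).2 this
end

section
/- Let M be a first-order structure and let a, b be tuples in M. If tp(a/b) is isolated and b is semi-isolated over a, then tp(b/a) is isolated. -/
open FirstOrder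

/-- Realization of a formula only depends on the free variables. -/
lemma realize_eqOn_freeVar {L : Language} {M : Type*} [L.Structure M] {α : Type*}
    [DecidableEq α] (φ : L.Formula α) {v v' : α → M}
    (h : ∀ x ∈ φ.freeVarFinset, v x = v' x) : φ.Realize v ↔ φ.Realize v' := by
  have hvv' : v ∘ (Subtype.val : (↑(φ.freeVarFinset : Set α)) → α)
      = v' ∘ Subtype.val := funext fun x => h x.1 (by exact_mod_cast x.2)
  have h1 := Language.BoundedFormula.realize_restrictFreeVar' (M := M) (φ := φ)
    (s := (φ.freeVarFinset : Set α)) subset_rfl (v := v) (xs := default)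
  have h2 := Language.BoundedFormula.realize_restrictFreeVar' (M := M) (φ := φ)
    (s := (φ.freeVarFinset : Set α)) subset_rfl (v := v') (xs := default)
  show Language.BoundedFormula.Realize φ v default ↔ Language.BoundedFormula.Realize φ v' default
  rw [← h1, ← h2, hvv']

/-- The key construction: universal closure over the `α`-variables of a formula
with variables in `α ⊕ β`, as a formula with variables in `β`. -/
lemma exists_univ_closure {L : Language} {M : Type*} [L.Structure M] [Nonempty M]
    {α β : Type*} (F : L.Formula (α ⊕ β)) :
    ∃ χ : L.Formula β, ∀ v : β → M,
      (χ.Realize v ↔ ∀ a' : α → M, F.Realize (Sum.elim a' v)) := by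
  classical
  set s := F.freeVarFinset with hs
  have hfin : Finite (Option {x : α // Sum.inl x ∈ s}) := by
    haveI : Finite {x : α // Sum.inl x ∈ s} := by
      apply Finite.of_injective (fun x => (⟨Sum.inl x.1, x.2⟩ : {z // z ∈ s}))
      intro x y hxy
      apply Subtype.ext
      simpa using congrArg Subtype.val hxy
    exact Finite.of_equiv ({x : α // Sum.inl x ∈ s} ⊕ PUnit.{1}) (Equiv.optionEquivSumPUnit _).symm
  refine ⟨Language.Formula.iAlls (Option {x : α // Sum.inl x ∈ s}) (F.relabel (fun z =>
    match z with
    | Sum.inr j => Sum.inl j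
    | Sum.inl x => if h : Sum.inl x ∈ s then Sum.inr (some ⟨x, h⟩)
        else Sum.inr none)), ?_⟩
  intro v
  rw [Language.Formula.realize_iAlls]
  simp only [Language.Formula.realize_relabel, Function.comp_def]
  constructor
  · intro H a'
    have := H (fun g => Option.elim g (Classical.arbitrary M) (fun x => a' x.1))
    refine (realize_eqOn_freeVar F ?_).mp this
    rintro (x | j) hx
    · simp only [Sum.elim_inl]
      rw [dif_pos hx]
      simp
    · simp
  · intro H i
    have := H (fun x => if h : Sum.inl x ∈ s then i (some ⟨x, h⟩)
      else Classical.arbitrary M)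
    refine (realize_eqOn_freeVar F ?_).mp this
    rintro (x | j) hx
    · simp only [Sum.elim_inl]
      rw [dif_pos hx, dif_pos hx]
      simp
    · simp

theorem stmt_12 {L : Language} {M : Type*} [L.Structure M]
    {α β : Type*} (a : α → M) (b : β → M)
    -- tp(a/b) is isolated, by the formula φ(x, b):
    (φ : L.Formula (α ⊕ β))
    (hφ1 : φ.Realize (Sum.elim a b))
    (hφ2 : ∀ a' : α → M, φ.Realize (Sum.elim a' b) →
      ∀ ρ : L.Formula (α ⊕ β), ρ.Realize (Sum.elim a b) ↔ ρ.Realize (Sum.elim a' b))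
    -- b is semi-isolated over a, by the formula ψ(a, y):
    (ψ : L.Formula (α ⊕ β))
    (hψ1 : ψ.Realize (Sum.elim a b))
    (hψ2 : ∀ b' : β → M, ψ.Realize (Sum.elim a b') →
      ∀ χ : L.Formula β, χ.Realize b ↔ χ.Realize b') :
    -- then tp(b/a) is isolated, by some formula θ(a, y):
    ∃ θ : L.Formula (α ⊕ β), θ.Realize (Sum.elim a b) ∧
      ∀ b' : β → M, θ.Realize (Sum.elim a b') →
        ∀ ρ : L.Formula (α ⊕ β), ρ.Realize (Sum.elim a b) ↔ ρ.Realize (Sum.elim a b') := by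
  by_cases hM : Nonempty M
  case neg =>
    -- M is empty, so β is empty and b' = b always.
    have hβ : IsEmpty β := ⟨fun j => hM ⟨b j⟩⟩
    refine ⟨φ, hφ1, fun b' _ ρ => ?_⟩
    have hbb : b' = b := funext fun j => isEmptyElim j
    rw [hbb]
  case pos =>
    -- Main case. Key claim: for every ρ, ρ(a,b) → ρ(a,b').
    have key : ∀ b' : β → M, φ.Realize (Sum.elim a b') → ψ.Realize (Sum.elim a b') →
        ∀ ρ : L.Formula (α ⊕ β), ρ.Realize (Sum.elim a b) → ρ.Realize (Sum.elim a b') := by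
      intro b' hφb' hψb' ρ hρ
      obtain ⟨χ, hχ⟩ := exists_univ_closure (M := M) (φ.imp ρ)
      have hχb : χ.Realize b := by
        rw [hχ]
        intro a'
        rw [Language.Formula.realize_imp]
        intro hφ'
        exact (hφ2 a' hφ' ρ).mp hρ
      have hχb' : χ.Realize b' := (hψ2 b' hψb' χ).mp hχb
      have := (hχ b').mp hχb' a
      rw [Language.Formula.realize_imp] at this
      exact this hφb'
    refine ⟨φ ⊓ ψ, by simp [hφ1, hψ1], fun b' hb' ρ => ?_⟩
    rw [Language.Formula.realize_inf] at hb'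
    constructor
    · exact key b' hb'.1 hb'.2 ρ
    · intro hρ'
      by_contra hρ
      have := key b' hb'.1 hb'.2 ρ.not (by rw [Language.Formula.realize_not]; exact hρ)
      rw [Language.Formula.realize_not] at this
      exact this hρ'
end
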